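/- Abel's identity. Let n ≥ 1, let a : Fin n → ℝ → ℝ be n-times continuously differentiable on an open set I ⊆ ℝ, and let p_1, …, p_n : ℝ → ℝ satisfy, for all j and all x ∈ I, (d/dx)^n a_j(x) = ∑_{i=1}^{n} p_i(x) · (d/dx)^{n−i} a_j(x). Then the Wronskian determinant w(x) = det W(x) satisfies, for every x ∈ I, the first-order differential equation deriv w (x) = p_1(x) · w(x). -/

import Mathlib

open Matrix

/-- The Wronskian matrix of a family of functions `a : Fin n → ℝ → ℝ`:
entry `(i, j)` is the `i`-th iterated derivative of `a j` at `x`. -/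
noncomputable def wronskianMatrix (n : ℕ) (a : Fin n → ℝ → ℝ) (x : ℝ) :
    Matrix (Fin n) (Fin n) ℝ :=
  Matrix.of fun i j => iteratedDeriv (i : ℕ) (a j) x

lemma hasDerivAt_det_aux {n : ℕ} {A : ℝ → Matrix (Fin n) (Fin n) ℝ}
    {A' : Matrix (Fin n) (Fin n) ℝ} {x : ℝ}
    (h : ∀ i j, HasDerivAt (fun t => A t i j) (A' i j) x) :
    HasDerivAt (fun t => (A t).det)
      (∑ i, ((A x).updateRow i (A' i)).det) x := by
  classical
  have key : ∀ M : Matrix (Fin n) (Fin n) ℝ,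
      M.det = ∑ σ : Equiv.Perm (Fin n),
        ((Equiv.Perm.sign σ : ℤ) : ℝ) * ∏ j, M j (σ j) := by
    intro M
    rw [← Matrix.det_transpose, Matrix.det_apply]
    refine Finset.sum_congr rfl fun σ _ => ?_
    simp [Units.smul_def, zsmul_eq_mul, Matrix.transpose_apply]
  have H : HasDerivAt (fun t => (A t).det)
      (∑ σ : Equiv.Perm (Fin n), ((Equiv.Perm.sign σ : ℤ) : ℝ) *
        ∑ j, (∏ k ∈ Finset.univ.erase j, A x k (σ k)) * A' j (σ j)) x := by
    have : ∀ t, (A t).det = ∑ σ : Equiv.Perm (Fin n),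
        ((Equiv.Perm.sign σ : ℤ) : ℝ) * ∏ j, A t j (σ j) := fun t => key (A t)
    simp only [this]
    apply HasDerivAt.fun_sum
    intro σ _
    have hp := HasDerivAt.fun_finsetProd (u := Finset.univ)
      (f := fun j t => A t j (σ j)) (f' := fun j => A' j (σ j))
      (fun j _ => h j (σ j))
    simpa [smul_eq_mul] using hp.const_mul (((Equiv.Perm.sign σ : ℤ) : ℝ))
  convert H using 1
  simp only [Finset.mul_sum]
  rw [Finset.sum_comm]
  refine Finset.sum_congr rfl fun i _ => ?_
  rw [key]
  refine Finset.sum_congr rfl fun σ _ => ?_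
  rw [← Finset.mul_prod_erase _ _ (Finset.mem_univ i), Matrix.updateRow_self]
  have hrest : ∀ k ∈ Finset.univ.erase i,
      (A x).updateRow i (A' i) k (σ k) = A x k (σ k) := fun k hk => by
    rw [Matrix.updateRow_ne (Finset.ne_of_mem_erase hk)]
  rw [Finset.prod_congr rfl hrest]
  ring

lemma hasDerivAt_iteratedDeriv_aux {n : ℕ} {f : ℝ → ℝ} {I : Set ℝ} (hI : IsOpen I)
    (hf : ContDiffOn ℝ (n : ℕ∞) f I) {m : ℕ} (hm : m < n) {x : ℝ} (hx : x ∈ I) :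
    HasDerivAt (iteratedDeriv m f) (iteratedDeriv (m + 1) f x) x := by
  have hd : DifferentiableOn ℝ (iteratedDerivWithin m f I) I :=
    hf.differentiableOn_iteratedDerivWithin (by exact_mod_cast hm) hI.uniqueDiffOn
  have heq : Set.EqOn (iteratedDerivWithin m f I) (iteratedDeriv m f) I := by
    intro y hy
    simp [iteratedDerivWithin, iteratedDeriv, iteratedFDerivWithin_of_isOpen m hI hy]
  have h1 : DifferentiableAt ℝ (iteratedDeriv m f) x := by
    have h2 : DifferentiableAt ℝ (iteratedDerivWithin m f I) x :=
      (hd x hx).differentiableAt (hI.mem_nhds hx)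
    have hev : iteratedDeriv m f =ᶠ[nhds x] iteratedDerivWithin m f I := by
      filter_upwards [hI.mem_nhds hx] with y hy using (heq hy).symm
    exact h2.congr_of_eventuallyEq hev
  have := h1.hasDerivAt
  rwa [iteratedDeriv_succ]

theorem abel_identity (n : ℕ) (hn : 1 ≤ n)
    (I : Set ℝ) (hI : IsOpen I)
    (a : Fin n → ℝ → ℝ) (ha : ∀ j, ContDiffOn ℝ (n : ℕ∞) (a j) I)
    (p : Fin n → ℝ → ℝ)
    (hODE : ∀ j, ∀ x ∈ I,
      iteratedDeriv n (a j) x = ∑ i : Fin n, p i x * iteratedDeriv (n - 1 - (i : ℕ)) (a j) x)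
    (x : ℝ) (hx : x ∈ I) :
    deriv (fun t => (wronskianMatrix n a t).det) x =
      p ⟨0, hn⟩ x * (wronskianMatrix n a x).det := by
  classical
  have hW : ∀ i j : Fin n, HasDerivAt (fun t => wronskianMatrix n a t i j)
      (iteratedDeriv ((i : ℕ) + 1) (a j) x) x := fun i j =>
    hasDerivAt_iteratedDeriv_aux hI (ha j) i.isLt hx
  set A' : Matrix (Fin n) (Fin n) ℝ :=
    Matrix.of fun (i j : Fin n) => iteratedDeriv ((i : ℕ) + 1) (a j) x with hA'
  have hdet := hasDerivAt_det_aux (A := wronskianMatrix n a) (A' := A') (x := x) hW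
  rw [hdet.deriv]
  set W := wronskianMatrix n a x with hWdef
  set last : Fin n := ⟨n - 1, by omega⟩ with hlast
  rw [Finset.sum_eq_single last]
  · -- the surviving term equals p₁ x * det W
    have hrow : A' last = ∑ k : Fin n, (fun m : Fin n => p m.rev x) k • W k := by
      funext j
      have h1 : (last : ℕ) + 1 = n := by simp [hlast]; omega
      have h2 : A' last j = iteratedDeriv n (a j) x := by
        simp only [hA', Matrix.of_apply, h1]
      rw [h2, hODE j x hx]
      rw [Fintype.sum_apply]
      refine Fintype.sum_equiv Fin.revPerm _ _ fun k => ?_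
      have hv : ((Fin.revPerm k : Fin n) : ℕ) = n - 1 - (k : ℕ) := by
        simp [Fin.revPerm, Fin.rev]; omega
      have hvv : ((Fin.revPerm k : Fin n).rev : ℕ) = (k : ℕ) := by
        simp [Fin.rev_rev]
      have : W (Fin.revPerm k) j = iteratedDeriv (n - 1 - (k : ℕ)) (a j) x := by
        simp only [hWdef, wronskianMatrix, Matrix.of_apply, hv]
      simp only [Pi.smul_apply, smul_eq_mul, this]
      congr 1
      have : (Fin.revPerm k : Fin n).rev = k := Fin.rev_rev k
      rw [show Fin.revPerm k = k.rev from rfl, Fin.rev_rev]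
    rw [hrow, Matrix.det_updateRow_sum]
    have : (last.rev : Fin n) = ⟨0, hn⟩ := by
      ext
      simp [Fin.val_rev, hlast]
      omega
    rw [this]
    simp [smul_eq_mul]
  · -- all other rows give zero determinant
    intro i _ hi
    have hlt : (i : ℕ) + 1 < n := by
      rcases lt_or_eq_of_le (Nat.succ_le_of_lt i.isLt) with h | h
      · exact h
      · exfalso; apply hi; ext; simp [hlast]; omega
    have hrow : A' i = W ⟨(i : ℕ) + 1, hlt⟩ := by
      funext j
      simp [hA', hWdef, wronskianMatrix]
    rw [hrow]
    exact Matrix.det_updateRow_eq_zero (by simp [Fin.ext_iff])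
  · intro h
    exact absurd (Finset.mem_univ last) h
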